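/- Let (R,m) be a 1-dimensional Noetherian local ring, x a parameter, u ∈ R, and y = ux. Then y is a parameter if and only if the map R/(x)^lim → R/(y)^lim induced by multiplication by u is injective, i.e., if and only if (y)^lim : u = (x)^lim. -/

import Mathlib

/-- The limit closure of a single element: `(x)^lim = ⋃_{t≥1} ((x^t) : x^{t-1})`. -/
def limClosure1 {R : Type*} [CommRing R] (x : R) : Set R :=
  {r : R | ∃ t : ℕ, 1 ≤ t ∧ x ^ (t - 1) * r ∈ Ideal.span {x ^ t}}

/-- The annihilator of an element, as an ideal. -/
def annIdeal {R : Type*} [CommRing R] (a : R) : Ideal R where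
  carrier := {b | b * a = 0}
  add_mem' := by
    intro b c hb hc
    simp only [Set.mem_setOf_eq] at *
    rw [add_mul, hb, hc, add_zero]
  zero_mem' := by simp
  smul_mem' := by
    intro c b hb
    simp only [smul_eq_mul, Set.mem_setOf_eq] at *
    rw [mul_assoc, hb, mul_zero]

@[simp] lemma mem_annIdeal {R : Type*} [CommRing R] {a b : R} :
    b ∈ annIdeal a ↔ b * a = 0 := Iff.rfl

lemma mul_pow_eq_zero_mono {R : Type*} [CommRing R] {a b : R} {t t' : ℕ}
    (h : a * b ^ t = 0) (htt' : t ≤ t') : a * b ^ t' = 0 := by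
  obtain ⟨d, rfl⟩ := Nat.le.dest htt'
  rw [pow_add, ← mul_assoc, h, zero_mul]

/-- in a 1-dimensional Noetherian local ring with `x` a parameter
and `y = u x`, `y` is a parameter iff the multiplication-by-`u` map
`R/(x)^lim → R/(y)^lim` is injective, i.e. iff `(y)^lim : u = (x)^lim`. -/
theorem stmt9 {R : Type*} [CommRing R] [IsNoetherianRing R] [IsLocalRing R]
    (hdim : ringKrullDim R = 1)
    (x u y : R) (hy : y = u * x)
    (hx : (Ideal.span {x}).radical = IsLocalRing.maximalIdeal R) :
    (Ideal.span {y}).radical = IsLocalRing.maximalIdeal R ↔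
      (∀ r : R, u * r ∈ limClosure1 y → r ∈ limClosure1 x) := by
  subst hy
  have hxm : x ∈ IsLocalRing.maximalIdeal R :=
    hx ▸ Ideal.le_radical (Ideal.mem_span_singleton_self x)
  constructor
  · -- forward direction
    rintro hyrad r ⟨t, ht, hc⟩
    obtain ⟨t, rfl⟩ : ∃ t', t = t' + 1 := ⟨t - 1, (Nat.succ_pred_eq_of_pos ht).symm⟩
    rw [Nat.add_sub_cancel, Ideal.mem_span_singleton] at hc
    obtain ⟨c, hc⟩ := hc
    -- x is in the radical of (y^(t+1))
    have hxrad : x ∈ (Ideal.span {(u * x) ^ (t + 1)}).radical := by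
      rw [← Ideal.span_singleton_pow, Ideal.radical_pow _ (Nat.succ_ne_zero t), hyrad]
      exact hxm
    obtain ⟨n, hn⟩ := Ideal.mem_radical_iff.mp hxrad
    rw [Ideal.mem_span_singleton] at hn
    obtain ⟨d, hn⟩ := hn
    refine ⟨n + t + 1, by omega, ?_⟩
    rw [Nat.add_sub_cancel, Ideal.mem_span_singleton]
    exact ⟨c, by linear_combination (x ^ (t + 1) * d) * hc +
      (x ^ t * r - x ^ (t + 1) * c) * hn⟩
  · -- converse
    intro H
    have hmprime : (IsLocalRing.maximalIdeal R).IsPrime :=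
      (IsLocalRing.maximalIdeal.isMaximal R).isPrime
    refine le_antisymm ?_ ?_
    · rw [← hx]
      exact Ideal.radical_mono (Ideal.span_le.mpr (by
        simp [Ideal.mem_span_singleton, Dvd.intro_left u rfl]))
    · by_contra hlt
      obtain ⟨z, hzm, hzrad⟩ := SetLike.not_le_iff_exists.mp hlt
      rw [Ideal.radical_eq_sInf, Submodule.mem_sInf] at hzrad
      push_neg at hzrad
      obtain ⟨q, ⟨hyq, hq⟩, hzq⟩ := hzrad
      have hqm : q < IsLocalRing.maximalIdeal R :=
        lt_of_le_of_ne (IsLocalRing.le_maximalIdeal hq.ne_top)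
          (fun h => hzq (h ▸ hzm))
      have hxq : x ∉ q := by
        intro hxq
        have hmq : IsLocalRing.maximalIdeal R ≤ q := by
          rw [← hx, ← hq.radical]
          exact Ideal.radical_mono (Ideal.span_le.mpr (Set.singleton_subset_iff.mpr hxq))
        exact hzq (hmq hzm)
      by_cases hcase : ∃ s k, s ∉ q ∧ s * (u * x) ^ k = 0
      · obtain ⟨s, k, hsq, hsk⟩ := hcase
        -- stabilization of annihilator chains
        obtain ⟨N, hNstab⟩ : ∃ N, ∀ j, N ≤ j → annIdeal (x ^ N) = annIdeal (x ^ j) := by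
          obtain ⟨N, hN⟩ := monotone_stabilizes_iff_noetherian.mpr
            (inferInstance : IsNoetherian R R)
            ⟨fun n => annIdeal (x ^ n), monotone_nat_of_le_succ (fun n b hb => by
              simp only [mem_annIdeal] at *
              exact mul_pow_eq_zero_mono hb (Nat.le_succ n))⟩
          exact ⟨N, fun j hj => hN j hj⟩
        obtain ⟨M, hMN, hMstab⟩ : ∃ M, N ≤ M ∧
            ∀ j, M ≤ j → annIdeal ((u * x) ^ M) = annIdeal ((u * x) ^ j) := by
          obtain ⟨M₀, hM₀⟩ := monotone_stabilizes_iff_noetherian.mpr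
            (inferInstance : IsNoetherian R R)
            ⟨fun n => annIdeal ((u * x) ^ n), monotone_nat_of_le_succ (fun n b hb => by
              simp only [mem_annIdeal] at *
              exact mul_pow_eq_zero_mono hb (Nat.le_succ n))⟩
          refine ⟨max M₀ N, le_max_right _ _, fun j hj => ?_⟩
          have h1 := hM₀ (max M₀ N) (le_max_left _ _)
          have h2 := hM₀ j (le_trans (le_max_left _ _) hj)
          exact h1.symm.trans h2
        -- F1 : dividing by x preserves membership in I = ann(y^M)
        have F1 : ∀ a : R, (a * x) * (u * x) ^ M = 0 → a * (u * x) ^ M = 0 := by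
          intro a ha
          have h1 : a * (u * x) ^ (M + 1) = 0 := by
            have : a * (u * x) ^ (M + 1) = u * ((a * x) * (u * x) ^ M) := by ring
            rw [this, ha, mul_zero]
          have := (hMstab (M + 1) (Nat.le_succ M)).symm
          exact mem_annIdeal.mp (this ▸ mem_annIdeal.mpr h1)
        -- F2 : ann(x^N) ⊆ ann(y^M)
        have F2 : ∀ a : R, a * x ^ N = 0 → a * (u * x) ^ M = 0 := by
          intro a ha
          have h1 : a * (u * x) ^ M = u ^ M * (a * x ^ M) := by
            rw [mul_pow]; ring
          have h2 : a * x ^ M = 0 := mul_pow_eq_zero_mono ha hMN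
          rw [h1, h2, mul_zero]
        -- F3 : elements of limClosure1 x are of the form e*x + (ann(x^N))
        have F3 : ∀ a : R, a ∈ limClosure1 x → ∃ e, (a - e * x) * x ^ N = 0 := by
          rintro a ⟨t, ht, hmem⟩
          obtain ⟨t, rfl⟩ : ∃ t', t = t' + 1 := ⟨t - 1, (Nat.succ_pred_eq_of_pos ht).symm⟩
          rw [Nat.add_sub_cancel, Ideal.mem_span_singleton] at hmem
          obtain ⟨e, he⟩ := hmem
          refine ⟨e, ?_⟩
          have h1 : (a - e * x) * x ^ t = 0 := by linear_combination he
          have h2 : (a - e * x) * x ^ max t N = 0 := mul_pow_eq_zero_mono h1 (le_max_left _ _)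
          have h3 := (hNstab (max t N) (le_max_right _ _)).symm
          exact mem_annIdeal.mp (h3 ▸ mem_annIdeal.mpr h2)
        -- main induction
        have F4 : ∀ i : ℕ, ∀ a : R, a * (u * x) ^ M = 0 →
            ∃ e w, a = e * x ^ i + w ∧ w * x ^ N = 0 ∧ e * (u * x) ^ M = 0 := by
          intro i
          induction i with
          | zero => exact fun a ha => ⟨a, 0, by ring, by ring, ha⟩
          | succ i ih =>
            intro a ha
            obtain ⟨e, w, h1, h2, h3⟩ := ih a ha
            have hue : u * e ∈ limClosure1 (u * x) := by
              refine ⟨M + 1, by omega, ?_⟩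
              rw [Nat.add_sub_cancel]
              have : (u * x) ^ M * (u * e) = 0 := by linear_combination u * h3
              rw [this]
              exact Submodule.zero_mem _
            obtain ⟨f, hf⟩ := F3 e (H e hue)
            refine ⟨f, (e - f * x) * x ^ i + w, by linear_combination h1, ?_, ?_⟩
            · have : ((e - f * x) * x ^ i + w) * x ^ N
                  = x ^ i * ((e - f * x) * x ^ N) + w * x ^ N := by ring
              rw [this, hf, h2, mul_zero, add_zero]
            · have hw2 : (e - f * x) * (u * x) ^ M = 0 := F2 _ hf
              have hfx : (f * x) * (u * x) ^ M = 0 := by linear_combination h3 - hw2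
              exact F1 f hfx
        -- s lies in I = ann(y^M)
        have hsI : s * (u * x) ^ M = 0 := by
          have h1 : s * (u * x) ^ max k M = 0 := mul_pow_eq_zero_mono hsk (le_max_left _ _)
          have h2 := (hMstab (max k M) (le_max_right _ _)).symm
          exact mem_annIdeal.mp (h2 ▸ mem_annIdeal.mpr h1)
        -- now the Krull intersection argument in R ⧸ ann(x^N)
        by_cases hxN : x ^ N = 0
        · exact hxq (hq.mem_of_pow_mem N (hxN ▸ q.zero_mem))
        have hJtop : annIdeal (x ^ N) ≠ ⊤ := by
          intro h
          have : (1 : R) ∈ annIdeal (x ^ N) := h ▸ Submodule.mem_top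
          rw [mem_annIdeal, one_mul] at this
          exact hxN this
        haveI : Nontrivial (R ⧸ annIdeal (x ^ N)) := Ideal.Quotient.nontrivial_iff.mpr hJtop
        haveI : IsLocalRing (R ⧸ annIdeal (x ^ N)) :=
          IsLocalRing.of_surjective' (Ideal.Quotient.mk _) Ideal.Quotient.mk_surjective
        have hxbar : Ideal.Quotient.mk (annIdeal (x ^ N)) x ∈
            IsLocalRing.maximalIdeal (R ⧸ annIdeal (x ^ N)) := by
          rw [IsLocalRing.mem_maximalIdeal]
          intro hunit
          obtain ⟨v, hv⟩ := hunit.exists_left_inv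
          obtain ⟨c, rfl⟩ := Ideal.Quotient.mk_surjective v
          have hcx : c * x - 1 ∈ annIdeal (x ^ N) := by
            rw [← Ideal.Quotient.eq_zero_iff_mem, map_sub, map_mul, map_one, hv, sub_self]
          rw [mem_annIdeal] at hcx
          have hunit2 : IsUnit (1 - c * x) :=
            IsLocalRing.isUnit_one_sub_self_of_mem_nonunits _
              (Ideal.mul_mem_left _ c hxm)
          have : (1 - c * x) * x ^ N = 0 := by linear_combination -hcx
          exact hxN ((hunit2.mul_right_eq_zero).mp this)
        have hKrull := Ideal.iInf_pow_eq_bot_of_isLocalRing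
          (R := R ⧸ annIdeal (x ^ N)) (IsLocalRing.maximalIdeal _)
          (Ideal.IsPrime.ne_top (IsLocalRing.maximalIdeal.isMaximal _).isPrime)
        have hsJ : s ∈ annIdeal (x ^ N) := by
          rw [← Ideal.Quotient.eq_zero_iff_mem, ← Submodule.mem_bot (R := R ⧸ annIdeal (x ^ N)),
            ← hKrull, Submodule.mem_iInf]
          intro i
          obtain ⟨e, w, h1, h2, h3⟩ := F4 i s hsI
          have hw : Ideal.Quotient.mk (annIdeal (x ^ N)) w = 0 :=
            Ideal.Quotient.eq_zero_iff_mem.mpr (mem_annIdeal.mpr h2)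
          have : Ideal.Quotient.mk (annIdeal (x ^ N)) s =
              Ideal.Quotient.mk (annIdeal (x ^ N)) e *
                (Ideal.Quotient.mk (annIdeal (x ^ N)) x) ^ i := by
            rw [h1, map_add, map_mul, map_pow, hw, add_zero]
          rw [this]
          exact Ideal.mul_mem_left _ _ (Ideal.pow_mem_pow hxbar i)
        rw [mem_annIdeal] at hsJ
        rcases hq.mem_or_mem (show s * x ^ N ∈ q from hsJ ▸ q.zero_mem) with h | h
        · exact hsq h
        · exact hxq (hq.mem_of_pow_mem N h)
      · -- no such s: get a prime strictly below q, contradicting dim = 1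
        push_neg at hcase
        set S : Submonoid R :=
          { carrier := {a | ∃ s k, s ∉ q ∧ a = s * (u * x) ^ k}
            one_mem' := ⟨1, 0, fun h => hq.ne_top (Ideal.eq_top_of_isUnit_mem q h isUnit_one),
              by ring⟩
            mul_mem' := by
              rintro a b ⟨sa, ka, hsa, rfl⟩ ⟨sb, kb, hsb, rfl⟩
              exact ⟨sa * sb, ka + kb, fun h => ((hq.mem_or_mem h).elim hsa hsb),
                by ring⟩ } with hS
        have hdisj : Disjoint ((⊥ : Ideal R) : Set R) (S : Set R) := by
          rw [Set.disjoint_left]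
          rintro a ha ⟨s, k, hs, rfl⟩
          rw [SetLike.mem_coe, Ideal.mem_bot] at ha
          exact hcase s k hs ha
        obtain ⟨P, hP, -, hPdisj⟩ := Ideal.exists_le_prime_disjoint ⊥ S hdisj
        have hPq : P < q := by
          constructor
          · intro a ha
            by_contra haq
            exact Set.disjoint_left.mp hPdisj ha ⟨a, 0, haq, by ring⟩
          · intro hqP
            refine Set.disjoint_left.mp hPdisj (hqP (hyq (Ideal.mem_span_singleton_self _)))
              ⟨1, 1, fun h => hq.ne_top (Ideal.eq_top_of_isUnit_mem q h isUnit_one), by ring⟩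
        -- build a chain of length 2 in the prime spectrum
        let p0 : PrimeSpectrum R := ⟨P, hP⟩
        let p1 : PrimeSpectrum R := ⟨q, hq⟩
        let p2 : PrimeSpectrum R := ⟨IsLocalRing.maximalIdeal R, hmprime⟩
        let ch : LTSeries (PrimeSpectrum R) :=
          ((RelSeries.singleton _ p2).cons p1 ((PrimeSpectrum.asIdeal_lt_asIdeal p1 p2).mp hqm)).cons p0
            (by exact (PrimeSpectrum.asIdeal_lt_asIdeal p0 p1).mp hPq)
        have hlen := Order.LTSeries.length_le_krullDim (α := PrimeSpectrum R) ch
        rw [show Order.krullDim (PrimeSpectrum R) = ringKrullDim R from rfl, hdim] at hlen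
        have hch : ch.length = 2 := rfl
        rw [hch] at hlen
        norm_num at hlen
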